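/- Let m be a positive integer and let φ : ℍ×ℂ×ℂ → ℂ be holomorphic and satisfy, for all τ ∈ ℍ and z, w ∈ ℂ: φ(τ, z+1, w) = φ(τ,z,w) and e^{2πim(τ+2z)} φ(τ, z+τ, w) = φ(τ,z,w). Then φ admits a theta decomposition: for all (τ,z,w), φ(τ,z,w) = Σ_{ℓ=0}^{2m−1} h_ℓ(τ,w) · θ_{m,ℓ}(τ,z), where h_ℓ(τ,w) := e^{−πiℓ²τ/(2m)} ∫_0^1 φ(τ, t, w) e^{−2πiℓt} dt. -/

import Mathlib

open Complex MeasureTheory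

/-- The theta series `θ_{m,ℓ}(τ,z) = Σ_{r ≡ ℓ (mod 2m)} e^{2πiτr²/(4m)} e^{2πirz}`. -/
noncomputable def thetaComp (m : ℕ) (ℓ : ℤ) (τ z : ℂ) : ℂ :=
  ∑' r : {r : ℤ // r ≡ ℓ [ZMOD (2 * (m : ℤ))]},
    Complex.exp (2 * (Real.pi : ℂ) * I * τ * ((r : ℤ) : ℂ) ^ 2 / (4 * (m : ℂ))) *
      Complex.exp (2 * (Real.pi : ℂ) * I * ((r : ℤ) : ℂ) * z)

/-- The theta coefficient `h_ℓ(τ,w) = e^{−πiℓ²τ/(2m)} ∫_0^1 φ(τ,t,w) e^{−2πiℓt} dt`. -/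
noncomputable def thetaCoef (m : ℕ) (ℓ : ℤ) (φ : ℂ → ℂ → ℂ → ℂ) (τ w : ℂ) : ℂ :=
  Complex.exp (-(Real.pi : ℂ) * I * ((ℓ : ℂ)) ^ 2 * τ / (2 * (m : ℂ))) *
    ∫ t in (0 : ℝ)..1, φ τ ((t : ℂ)) w * Complex.exp (-2 * (Real.pi : ℂ) * I * (ℓ : ℂ) * (t : ℂ))

set_option linter.unusedVariables false
set_option linter.unusedSectionVars false

noncomputable def cInt (g : ℂ → ℂ) (n : ℤ) : ℂ :=
  ∫ t in (0:ℝ)..1, g t * Complex.exp (-2 * (Real.pi : ℂ) * I * (n : ℂ) * (t : ℂ))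

lemma shiftInt (F : ℂ → ℂ) (hF : Differentiable ℂ F) (hper : ∀ ζ : ℂ, F (ζ + 1) = F ζ)
    (s : ℂ) : (∫ t in (0:ℝ)..1, F t) = ∫ t in (0:ℝ)..1, F (t + s) := by
  have key := Complex.integral_boundary_rect_eq_zero_of_differentiableOn F 0 (⟨1, s.im⟩ : ℂ)
    hF.differentiableOn
  have h0re : (0:ℂ).re = 0 := rfl
  have h0im : (0:ℂ).im = 0 := rfl
  have h1re : (⟨1, s.im⟩ : ℂ).re = 1 := rfl
  have h1im : (⟨1, s.im⟩ : ℂ).im = s.im := rfl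
  rw [h0re, h0im, h1re, h1im] at key
  have h00 : ∀ x : ℝ, F (x + ((0:ℝ):ℂ) * I) = F x := by intro x; norm_num
  have hv : ∀ y : ℝ, F (((1:ℝ):ℂ) + y * I) = F (((0:ℝ):ℂ) + y * I) := by
    intro y
    push_cast
    rw [show (1:ℂ) + y * I = (0 + y * I) + 1 by ring, hper]
  simp only [h00, hv, smul_eq_mul] at key
  have hvert : (∫ t in (0:ℝ)..1, F t) = ∫ t in (0:ℝ)..1, F (t + s.im * I) := by
    linear_combination key
  rw [hvert]
  have hper' : Function.Periodic (fun t : ℝ => F (t + s.im * I)) 1 := by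
    intro t
    simp only []
    rw [show ((t + 1 : ℝ) : ℂ) + s.im * I = ((t : ℂ) + s.im * I) + 1 by push_cast; ring, hper]
  calc (∫ t in (0:ℝ)..1, F (t + s.im * I))
      = ∫ t in (0:ℝ)..(0+1:ℝ), F (t + s.im * I) := by norm_num
    _ = ∫ t in s.re..(s.re+1), F (t + s.im * I) := hper'.intervalIntegral_add_eq 0 s.re
    _ = ∫ t in (0:ℝ)..1, F ((t + s.re : ℝ) + s.im * I) := by
        rw [intervalIntegral.integral_comp_add_right (fun t : ℝ => F (t + s.im * I)) s.re]
        rw [zero_add, add_comm (1:ℝ) s.re]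
    _ = ∫ t in (0:ℝ)..1, F (t + s) := by
        refine intervalIntegral.integral_congr fun t _ => ?_
        push_cast
        rw [show (t:ℂ) + s.re + s.im * I = t + (s.re + s.im * I) by ring, Complex.re_add_im]

section
variable {m : ℕ} {τ : ℂ} {g : ℂ → ℂ} (hm : 0 < m) (hgd : Differentiable ℂ g)
  (hgper : ∀ ζ : ℂ, g (ζ + 1) = g ζ)
  (hgell : ∀ ζ : ℂ, Complex.exp (2 * (Real.pi:ℂ) * I * (m:ℂ) * (τ + 2 * ζ)) * g (ζ + τ) = g ζ)

include hgd in
lemma Fn_diff (n : ℤ) : Differentiable ℂ (fun ζ : ℂ => g ζ * Complex.exp (-2 * (Real.pi:ℂ) * I * (n:ℂ) * ζ)) :=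
  hgd.mul (((differentiable_const _).mul differentiable_id).cexp)

include hgper in
lemma Fn_per (n : ℤ) : ∀ ζ : ℂ,
    g (ζ+1) * Complex.exp (-2 * (Real.pi:ℂ) * I * (n:ℂ) * (ζ+1)) =
    g ζ * Complex.exp (-2 * (Real.pi:ℂ) * I * (n:ℂ) * ζ) := by
  intro ζ
  rw [hgper, mul_add, Complex.exp_add, mul_one,
    show -2 * (Real.pi:ℂ) * I * (n:ℂ) = ((-n : ℤ) : ℂ) * (2 * Real.pi * I) by push_cast; ring,
    Complex.exp_int_mul_two_pi_mul_I, mul_one]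

include hm hgd hgper hgell in
lemma cInt_rec_rev (n : ℤ) :
    cInt g n = Complex.exp (-(2 * (Real.pi:ℂ) * I * ((n:ℂ) + m) * τ)) * cInt g (n + 2*m) := by
  have h1 : cInt g n = ∫ t in (0:ℝ)..1,
      g ((t:ℂ) + τ) * Complex.exp (-2 * (Real.pi:ℂ) * I * (n:ℂ) * ((t:ℂ) + τ)) :=
    shiftInt _ (Fn_diff hgd n) (Fn_per hgper n) τ
  rw [h1]
  have h2 : ∀ t : ℝ, g ((t:ℂ) + τ) * Complex.exp (-2 * (Real.pi:ℂ) * I * (n:ℂ) * ((t:ℂ) + τ)) =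
      Complex.exp (-(2 * (Real.pi:ℂ) * I * ((n:ℂ) + m) * τ)) *
        (g (t:ℂ) * Complex.exp (-2 * (Real.pi:ℂ) * I * ((n + 2*m : ℤ) : ℂ) * (t:ℂ))) := by
    intro t
    have hE := hgell (t : ℂ)
    have hg' : g ((t:ℂ) + τ) =
        Complex.exp (-(2 * (Real.pi:ℂ) * I * (m:ℂ) * (τ + 2 * (t:ℂ)))) * g (t:ℂ) := by
      rw [← hE, ← mul_assoc, ← Complex.exp_add,
        show -(2 * (Real.pi:ℂ) * I * (m:ℂ) * (τ + 2 * (t:ℂ))) +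
          2 * (Real.pi:ℂ) * I * (m:ℂ) * (τ + 2 * (t:ℂ)) = 0 by ring, Complex.exp_zero, one_mul]
    rw [hg',
      show (Complex.exp (-(2 * (Real.pi:ℂ) * I * (m:ℂ) * (τ + 2 * (t:ℂ)))) * g (t:ℂ)) *
          Complex.exp (-2 * (Real.pi:ℂ) * I * (n:ℂ) * ((t:ℂ) + τ)) =
        (Complex.exp (-(2 * (Real.pi:ℂ) * I * (m:ℂ) * (τ + 2 * (t:ℂ)))) *
          Complex.exp (-2 * (Real.pi:ℂ) * I * (n:ℂ) * ((t:ℂ) + τ))) * g (t:ℂ) by ring,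
      show Complex.exp (-(2 * (Real.pi:ℂ) * I * ((n:ℂ) + m) * τ)) *
          (g (t:ℂ) * Complex.exp (-2 * (Real.pi:ℂ) * I * ((n + 2*m : ℤ) : ℂ) * (t:ℂ))) =
        (Complex.exp (-(2 * (Real.pi:ℂ) * I * ((n:ℂ) + m) * τ)) *
          Complex.exp (-2 * (Real.pi:ℂ) * I * ((n + 2*m : ℤ) : ℂ) * (t:ℂ))) * g (t:ℂ) by ring,
      ← Complex.exp_add, ← Complex.exp_add]
    congr 2
    push_cast
    ring
  rw [intervalIntegral.integral_congr (fun t _ => h2 t), intervalIntegral.integral_const_mul]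
  rfl

include hm hgd hgper hgell in
lemma cInt_rec (n : ℤ) :
    cInt g (n + 2*m) = Complex.exp (2 * (Real.pi:ℂ) * I * ((n:ℂ) + m) * τ) * cInt g n := by
  rw [cInt_rec_rev hm hgd hgper hgell n, ← mul_assoc, ← Complex.exp_add,
    show 2 * (Real.pi:ℂ) * I * ((n:ℂ) + m) * τ + -(2 * (Real.pi:ℂ) * I * ((n:ℂ) + m) * τ) = 0
      by ring, Complex.exp_zero, one_mul]

include hm hgd hgper hgell in
lemma cInt_rel (ℓ k : ℤ) :
    cInt g (ℓ + 2*m*k) = Complex.exp (2 * (Real.pi:ℂ) * I * τ *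
      (((ℓ + 2*m*k : ℤ) : ℂ)^2 - (ℓ:ℂ)^2) / (4 * (m:ℂ))) * cInt g ℓ := by
  have hm' : ((m:ℂ)) ≠ 0 := by exact_mod_cast hm.ne'
  induction k using Int.induction_on with
  | zero => norm_num
  | succ k ih =>
    have harg : ℓ + 2*m*((k:ℤ)+1) = (ℓ + 2*m*k) + 2*m := by ring
    rw [harg, cInt_rec hm hgd hgper hgell (ℓ + 2*m*k), ih, ← mul_assoc, ← Complex.exp_add]
    congr 2
    push_cast
    field_simp
    ring
  | pred k ih =>
    have harg : ℓ + 2*(m:ℤ)*(-(k:ℤ)-1) + 2*(m:ℤ) = ℓ + 2*(m:ℤ)*(-(k:ℤ)) := by ring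
    have h := cInt_rec_rev hm hgd hgper hgell (ℓ + 2*(m:ℤ)*(-(k:ℤ)-1))
    rw [harg, ih, ← mul_assoc, ← Complex.exp_add] at h
    rw [h]
    congr 2
    push_cast
    field_simp
    ring

include hm hgd hgper hgell in
lemma cInt_congr (ℓ n : ℤ) (h : n ≡ ℓ [ZMOD (2 * (m:ℤ))]) :
    cInt g n = Complex.exp (2 * (Real.pi:ℂ) * I * τ * (n:ℂ)^2 / (4 * (m:ℂ))) *
      (Complex.exp (-(Real.pi:ℂ) * I * (ℓ:ℂ)^2 * τ / (2 * (m:ℂ))) * cInt g ℓ) := by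
  have hm' : ((m:ℂ)) ≠ 0 := by exact_mod_cast hm.ne'
  obtain ⟨k, hk⟩ := h.dvd
  have hn : n = ℓ + 2*(m:ℤ)*(-k) := by linarith
  rw [hn, cInt_rel hm hgd hgper hgell ℓ (-k), ← mul_assoc, ← Complex.exp_add]
  congr 2
  push_cast
  field_simp
  ring

include hm in
lemma cInt_summable {z : ℂ} (hτ : 0 < τ.im)
    (hrel : ∀ ℓ n : ℤ, n ≡ ℓ [ZMOD (2 * (m:ℤ))] →
      cInt g n = Complex.exp (2 * (Real.pi:ℂ) * I * τ * (n:ℂ)^2 / (4 * (m:ℂ))) *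
        (Complex.exp (-(Real.pi:ℂ) * I * (ℓ:ℂ)^2 * τ / (2 * (m:ℂ))) * cInt g ℓ)) :
    Summable (fun n : ℤ => cInt g n * Complex.exp (2 * (Real.pi:ℂ) * I * (n:ℂ) * z)) := by
  have hm' : ((m:ℂ)) ≠ 0 := by exact_mod_cast hm.ne'
  set C : ℝ := ∑ ℓ ∈ Finset.range (2*m),
    ‖Complex.exp (-(Real.pi:ℂ) * I * ((ℓ:ℤ):ℂ)^2 * τ / (2 * (m:ℂ))) * cInt g (ℓ:ℤ)‖ with hC
  have hτ' : 0 < (τ / (2*(m:ℂ))).im := by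
    have h1 : τ / (2*(m:ℂ)) = ((2*(m:ℝ))⁻¹ : ℝ) • τ := by
      rw [Complex.real_smul]
      push_cast
      field_simp
    rw [h1, Complex.smul_im]
    positivity
  have hsum : Summable fun n : ℤ => ‖jacobiTheta₂_term n z (τ / (2*(m:ℂ)))‖ :=
    summable_norm_iff.mpr ((summable_jacobiTheta₂_term_iff z _).mpr hτ')
  apply Summable.of_norm_bounded (g := fun n => C * ‖jacobiTheta₂_term n z (τ / (2*(m:ℂ)))‖)
    (hsum.mul_left C)
  intro n
  set ℓ : ℤ := n % (2*(m:ℤ)) with hℓ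
  have hℓ0 : 0 ≤ ℓ := Int.emod_nonneg n (by positivity)
  have hℓlt : ℓ < 2*(m:ℤ) := Int.emod_lt_of_pos n (by positivity)
  have hmem : ℓ.toNat ∈ Finset.range (2*m) := by
    simp only [Finset.mem_range]
    omega
  have hcast : ((ℓ.toNat : ℤ)) = ℓ := Int.toNat_of_nonneg hℓ0
  have hcong : n ≡ ℓ [ZMOD (2*(m:ℤ))] := by
    show n % (2*(m:ℤ)) = ℓ % (2*(m:ℤ))
    rw [hℓ, Int.emod_emod_of_dvd n dvd_rfl]
  rw [hrel ℓ n hcong]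
  have hjt : Complex.exp (2 * (Real.pi:ℂ) * I * τ * (n:ℂ)^2 / (4 * (m:ℂ))) *
      Complex.exp (2 * (Real.pi:ℂ) * I * (n:ℂ) * z) = jacobiTheta₂_term n z (τ / (2*(m:ℂ))) := by
    rw [jacobiTheta₂_term, ← Complex.exp_add]
    congr 1
    field_simp
    ring
  calc ‖Complex.exp (2 * (Real.pi:ℂ) * I * τ * (n:ℂ)^2 / (4 * (m:ℂ))) *
      (Complex.exp (-(Real.pi:ℂ) * I * (ℓ:ℂ)^2 * τ / (2 * (m:ℂ))) * cInt g ℓ) *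
      Complex.exp (2 * (Real.pi:ℂ) * I * (n:ℂ) * z)‖
      = ‖Complex.exp (-(Real.pi:ℂ) * I * (ℓ:ℂ)^2 * τ / (2 * (m:ℂ))) * cInt g ℓ‖ *
        ‖Complex.exp (2 * (Real.pi:ℂ) * I * τ * (n:ℂ)^2 / (4 * (m:ℂ))) *
          Complex.exp (2 * (Real.pi:ℂ) * I * (n:ℂ) * z)‖ := by
        rw [← norm_mul]; ring_nf
    _ ≤ C * ‖jacobiTheta₂_term n z (τ / (2*(m:ℂ)))‖ := by
        rw [hjt]
        apply mul_le_mul_of_nonneg_right _ (norm_nonneg _)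
        rw [hC]
        refine Finset.single_le_sum (f := fun ℓ' : ℕ =>
          ‖Complex.exp (-(Real.pi:ℂ) * I * ((ℓ':ℤ):ℂ)^2 * τ / (2 * (m:ℂ))) * cInt g (ℓ':ℤ)‖)
          (fun _ _ => norm_nonneg _) hmem |>.trans_eq' ?_
        rw [hcast]

include hgd hgper in
lemma gz_hasSum
    (hsummable : ∀ ζ : ℂ, Summable (fun n : ℤ =>
      cInt g n * Complex.exp (2 * (Real.pi:ℂ) * I * (n:ℂ) * ζ)))
    (z : ℂ) :
    HasSum (fun n : ℤ => cInt g n * Complex.exp (2 * (Real.pi:ℂ) * I * (n:ℂ) * z)) (g z) := by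
  haveI : Fact (0 < (1:ℝ)) := ⟨one_pos⟩
  set y : ℝ := z.im with hy
  set x : ℝ := z.re with hx
  set f : ℝ → ℂ := fun t => g ((t:ℂ) + (y:ℂ) * I) with hf
  have hfper : Function.Periodic f 1 := by
    intro t
    simp only [hf]
    rw [show ((t+1:ℝ):ℂ) + (y:ℂ) * I = ((t:ℂ) + (y:ℂ) * I) + 1 by push_cast; ring, hgper]
  have hfc : Continuous f := hgd.continuous.comp (by continuity)
  set a : ℝ := x - 2⁻¹ with ha
  have hxmem : x ∈ Set.Ico a (a + 1) := by
    constructor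
    · rw [ha]; norm_num
    · rw [ha]; linarith
  have hshift : ∀ n : ℤ, (∫ t in (0:ℝ)..1,
      g ((t:ℂ) + (y:ℂ) * I) * Complex.exp (-2 * (Real.pi:ℂ) * I * (n:ℂ) * ((t:ℂ) + (y:ℂ) * I)))
      = cInt g n := fun n => (shiftInt _ (Fn_diff hgd n) (Fn_per hgper n) ((y:ℂ) * I)).symm
  set F : C(AddCircle (1:ℝ), ℂ) := ⟨AddCircle.liftIco 1 a f,
    AddCircle.liftIco_continuous (by simpa using (hfper a).symm) hfc.continuousOn⟩ with hF
  have hcoeff : ∀ n : ℤ, fourierCoeff (⇑F) n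
      = cInt g n * Complex.exp (2 * (Real.pi:ℂ) * I * (n:ℂ) * ((y:ℂ) * I)) := by
    intro n
    have e1 : fourierCoeff (⇑F) n = fourierCoeffOn (lt_add_of_pos_right a one_pos) f n := by
      rw [show ⇑F = AddCircle.liftIco 1 a f from rfl]
      exact fourierCoeff_liftIco_eq f n
    have e2 : ∀ t : ℝ, (fourier (-n) (t : AddCircle (a+1-a))) • f t
        = f t * Complex.exp (-2 * (Real.pi:ℂ) * I * (n:ℂ) * (t:ℂ)) := by
      intro t
      rw [fourier_coe_apply, smul_eq_mul, mul_comm]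
      congr 1
      rw [show a+1-a = (1:ℝ) by ring]
      push_cast
      ring_nf
    rw [e1, fourierCoeffOn_eq_integral, intervalIntegral.integral_congr (fun t _ => e2 t)]
    have e3 : Function.Periodic (fun t : ℝ => f t * Complex.exp (-2 * (Real.pi:ℂ) * I * (n:ℂ) * (t:ℂ))) 1 := by
      intro t
      show f (t+1) * _ = f t * _
      rw [hfper t,
        show -2 * (Real.pi:ℂ) * I * (n:ℂ) * ((t+1:ℝ):ℂ) =
          -2 * (Real.pi:ℂ) * I * (n:ℂ) * (t:ℂ) + ((-n : ℤ) : ℂ) * (2 * Real.pi * I)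
          by push_cast; ring,
        Complex.exp_add, Complex.exp_int_mul_two_pi_mul_I, mul_one]
    have e4 : (∫ t in a..(a+1), f t * Complex.exp (-2 * (Real.pi:ℂ) * I * (n:ℂ) * (t:ℂ)))
        = ∫ t in (0:ℝ)..1, f t * Complex.exp (-2 * (Real.pi:ℂ) * I * (n:ℂ) * (t:ℂ)) := by
      simpa using e3.intervalIntegral_add_eq a 0
    have e5 : ∀ t : ℝ, f t * Complex.exp (-2 * (Real.pi:ℂ) * I * (n:ℂ) * (t:ℂ))
        = (g ((t:ℂ) + (y:ℂ) * I) * Complex.exp (-2 * (Real.pi:ℂ) * I * (n:ℂ) * ((t:ℂ) + (y:ℂ) * I)))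
          * Complex.exp (2 * (Real.pi:ℂ) * I * (n:ℂ) * ((y:ℂ) * I)) := by
      intro t
      calc f t * Complex.exp (-2 * (Real.pi:ℂ) * I * (n:ℂ) * (t:ℂ))
          = g ((t:ℂ) + (y:ℂ) * I) * (Complex.exp (-2 * (Real.pi:ℂ) * I * (n:ℂ) * ((t:ℂ) + (y:ℂ) * I))
            * Complex.exp (2 * (Real.pi:ℂ) * I * (n:ℂ) * ((y:ℂ) * I))) := by
            rw [← Complex.exp_add]
            show g ((t:ℂ) + (y:ℂ) * I) * _ = _
            congr 2
            ring
        _ = (g ((t:ℂ) + (y:ℂ) * I) * Complex.exp (-2 * (Real.pi:ℂ) * I * (n:ℂ) * ((t:ℂ) + (y:ℂ) * I)))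
            * Complex.exp (2 * (Real.pi:ℂ) * I * (n:ℂ) * ((y:ℂ) * I)) := by ring
    rw [e4, intervalIntegral.integral_congr (fun t _ => e5 t),
      intervalIntegral.integral_mul_const, hshift n]
    rw [show a+1-a = (1:ℝ) by ring]
    norm_num
  have hsumF : Summable (fourierCoeff (⇑F)) :=
    (hsummable ((y:ℂ) * I)).congr (fun n => (hcoeff n).symm)
  have hps := has_pointwise_sum_fourier_series_of_summable hsumF (↑x : AddCircle (1:ℝ))
  have hval : F (↑x : AddCircle (1:ℝ)) = g z := by
    rw [show F (↑x : AddCircle (1:ℝ)) = AddCircle.liftIco 1 a f ↑x from rfl,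
      AddCircle.liftIco_coe_apply hxmem]
    simp only [hf]
    rw [show (x:ℂ) + (y:ℂ) * I = z from Complex.re_add_im z]
  have hfun : ∀ n : ℤ, fourierCoeff (⇑F) n • fourier n ((↑x : AddCircle (1:ℝ)))
      = cInt g n * Complex.exp (2 * (Real.pi:ℂ) * I * (n:ℂ) * z) := by
    intro n
    rw [hcoeff n, fourier_coe_apply, smul_eq_mul, mul_assoc, ← Complex.exp_add]
    congr 2
    rw [show z = (x:ℂ) + (y:ℂ) * I from (Complex.re_add_im z).symm]
    push_cast
    ring
  simp only [hfun, hval] at hps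
  exact hps

end

/-- Theta decomposition: a holomorphic function `φ(τ,z,w)` which is `1`-periodic in `z` and
satisfies the index-`m` elliptic transformation law in `z` has a theta decomposition
`φ(τ,z,w) = Σ_{ℓ=0}^{2m−1} h_ℓ(τ,w) θ_{m,ℓ}(τ,z)`. -/
theorem theta_decomposition (m : ℕ) (hm : 0 < m) (φ : ℂ → ℂ → ℂ → ℂ)
    (hτ_hol : ∀ z w : ℂ, DifferentiableOn ℂ (fun τ => φ τ z w) {τ : ℂ | 0 < τ.im})
    (hz_hol : ∀ τ w : ℂ, 0 < τ.im → Differentiable ℂ (fun z => φ τ z w))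
    (hw_hol : ∀ τ z : ℂ, 0 < τ.im → Differentiable ℂ (fun w => φ τ z w))
    (hperiodic : ∀ τ z w : ℂ, 0 < τ.im → φ τ (z + 1) w = φ τ z w)
    (helliptic : ∀ τ z w : ℂ, 0 < τ.im →
      Complex.exp (2 * (Real.pi : ℂ) * I * (m : ℂ) * (τ + 2 * z)) * φ τ (z + τ) w = φ τ z w) :
    ∀ τ z w : ℂ, 0 < τ.im →
      φ τ z w = ∑ ℓ ∈ Finset.range (2 * m),
        thetaCoef m (ℓ : ℤ) φ τ w * thetaComp m (ℓ : ℤ) τ z := by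
  intro τ z w hτi
  haveI : NeZero (2 * m) := ⟨by omega⟩
  have hgd : Differentiable ℂ (fun ζ => φ τ ζ w) := hz_hol τ w hτi
  have hgper : ∀ ζ : ℂ, (fun ζ' => φ τ ζ' w) (ζ + 1) = (fun ζ' => φ τ ζ' w) ζ :=
    fun ζ => hperiodic τ ζ w hτi
  have hgell : ∀ ζ : ℂ, Complex.exp (2 * (Real.pi:ℂ) * I * (m:ℂ) * (τ + 2 * ζ)) *
      (fun ζ' => φ τ ζ' w) (ζ + τ) = (fun ζ' => φ τ ζ' w) ζ := fun ζ => helliptic τ ζ w hτi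
  have hrel : ∀ ℓ n : ℤ, n ≡ ℓ [ZMOD (2 * (m:ℤ))] →
      cInt (fun ζ => φ τ ζ w) n = Complex.exp (2 * (Real.pi:ℂ) * I * τ * (n:ℂ)^2 / (4 * (m:ℂ))) *
        (Complex.exp (-(Real.pi:ℂ) * I * (ℓ:ℂ)^2 * τ / (2 * (m:ℂ))) * cInt (fun ζ => φ τ ζ w) ℓ) :=
    fun ℓ n h => cInt_congr hm hgd hgper hgell ℓ n h
  have hsummable : ∀ ζ : ℂ, Summable (fun n : ℤ =>
      cInt (fun ζ' => φ τ ζ' w) n * Complex.exp (2 * (Real.pi:ℂ) * I * (n:ℂ) * ζ)) :=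
    fun ζ => cInt_summable hm hτi hrel
  have hHasSum := gz_hasSum hgd hgper hsummable z
  have hfib := hHasSum.tsum_fiberwise (fun n : ℤ => (n : ZMod (2 * m)))
  have hfin : φ τ z w = ∑ c : ZMod (2 * m),
      ∑' n : (fun n : ℤ => (n : ZMod (2 * m))) ⁻¹' {c},
        cInt (fun ζ => φ τ ζ w) (n : ℤ) *
          Complex.exp (2 * (Real.pi:ℂ) * I * ((n : ℤ):ℂ) * z) :=
    ((hasSum_fintype _).unique hfib).symm
  rw [hfin]
  refine (Finset.sum_nbij' (fun ℓ : ℕ => ((ℓ : ℕ) : ZMod (2 * m))) (fun c : ZMod (2 * m) => c.val)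
    ?_ ?_ ?_ ?_ ?_).symm
  · intro a _; exact Finset.mem_univ _
  · intro c _; exact Finset.mem_range.mpr (ZMod.val_lt c)
  · intro a ha; exact ZMod.val_cast_of_lt (Finset.mem_range.mp ha)
  · intro c _; exact ZMod.natCast_rightInverse c
  · intro ℓ hℓ
    -- goal: thetaCoef * thetaComp = ∑' n : fiber, ...
    have hiff : ∀ r : ℤ, r ≡ ((ℓ:ℤ)) [ZMOD (2 * (m:ℤ))] ↔
        r ∈ (fun n : ℤ => (n : ZMod (2 * m))) ⁻¹' {((ℓ : ℕ) : ZMod (2 * m))} := by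
      intro r
      have hmod : (((2 * m : ℕ)) : ℤ) = 2 * (m:ℤ) := by push_cast; ring
      simp only [Set.mem_preimage, Set.mem_singleton_iff,
        show ((ℓ : ℕ) : ZMod (2 * m)) = (((ℓ:ℕ):ℤ) : ZMod (2 * m)) by push_cast; rfl,
        ZMod.intCast_eq_intCast_iff, hmod]
    have he := Equiv.tsum_eq (Equiv.subtypeEquivRight hiff)
      (fun n : (fun n : ℤ => (n : ZMod (2 * m))) ⁻¹' {((ℓ : ℕ) : ZMod (2 * m))} =>
        cInt (fun ζ => φ τ ζ w) (n : ℤ) * Complex.exp (2 * (Real.pi:ℂ) * I * ((n : ℤ):ℂ) * z))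
    have hterm : ∀ r : {r : ℤ // r ≡ ((ℓ:ℤ)) [ZMOD (2 * (m:ℤ))]},
        cInt (fun ζ => φ τ ζ w) (r : ℤ) * Complex.exp (2 * (Real.pi:ℂ) * I * ((r : ℤ):ℂ) * z)
        = thetaCoef m (ℓ : ℤ) φ τ w *
          (Complex.exp (2 * (Real.pi : ℂ) * I * τ * ((r : ℤ) : ℂ) ^ 2 / (4 * (m : ℂ))) *
            Complex.exp (2 * (Real.pi : ℂ) * I * ((r : ℤ) : ℂ) * z)) := by
      intro r
      rw [hrel (ℓ:ℤ) (r:ℤ) r.prop]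
      show _ = (Complex.exp (-(Real.pi : ℂ) * I * (((ℓ:ℤ) : ℂ)) ^ 2 * τ / (2 * (m : ℂ))) *
        cInt (fun ζ => φ τ ζ w) (ℓ:ℤ)) * _
      ring
    have hfiber : (∑' n : (fun n : ℤ => (n : ZMod (2 * m))) ⁻¹' {((ℓ : ℕ) : ZMod (2 * m))},
        cInt (fun ζ => φ τ ζ w) (n : ℤ) *
          Complex.exp (2 * (Real.pi:ℂ) * I * ((n : ℤ):ℂ) * z))
        = thetaCoef m (ℓ : ℤ) φ τ w * thetaComp m (ℓ : ℤ) τ z := by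
      have he' : (∑' c : {r : ℤ // r ≡ ((ℓ:ℤ)) [ZMOD (2 * (m:ℤ))]},
          cInt (fun ζ => φ τ ζ w) (c : ℤ) *
            Complex.exp (2 * (Real.pi:ℂ) * I * ((c : ℤ):ℂ) * z))
          = ∑' n : (fun n : ℤ => (n : ZMod (2 * m))) ⁻¹' {((ℓ : ℕ) : ZMod (2 * m))},
            cInt (fun ζ => φ τ ζ w) (n : ℤ) *
              Complex.exp (2 * (Real.pi:ℂ) * I * ((n : ℤ):ℂ) * z) := he
      rw [← he', tsum_congr (fun r => hterm r), tsum_mul_left, thetaComp]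
    exact hfiber.symm
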